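/- arXiv:math/0112315 — 3 statements merged into one kernel-verified Lean document; each statement's English description precedes it below -/
import Mathlib

section
/- Let (Ω, F, P) be a probability space and let A_1, …, A_n be events with union A = ⋃_{i=1}^n A_i. If Σ_{i=1}^n P(A_i) > 0, then P(A) ≥ (Σ_{i=1}^n P(A_i))² / (Σ_{i=1}^n P(A_i) + 2 Σ_{1 ≤ i < j ≤ n} P(A_i ∩ A_j)). -/
open MeasureTheory Finset

theorem inclusion_exclusion_lower_bound
    {Ω : Type*} [MeasurableSpace Ω] (P : Measure Ω) [IsProbabilityMeasure P]
    (n : ℕ) (A : Fin n → Set Ω) (hA : ∀ i, MeasurableSet (A i))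
    (hpos : 0 < ∑ i, (P (A i)).toReal) :
    (∑ i, (P (A i)).toReal) ^ 2 /
      ((∑ i, (P (A i)).toReal) +
        2 * ∑ i, ∑ j, if i < j then (P (A i ∩ A j)).toReal else 0)
      ≤ (P (⋃ i, A i)).toReal := by
  classical
  set f : Ω → ℝ := fun x => ∑ i, Set.indicator (A i) (fun _ => (1:ℝ)) x with hf
  set g : Ω → ℝ := Set.indicator (⋃ i, A i) (fun _ => (1:ℝ)) with hg
  have hAU : MeasurableSet (⋃ i, A i) := MeasurableSet.iUnion hA
  -- integrability of indicator products
  have hint : ∀ i j : Fin n, Integrable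
      (fun x => Set.indicator (A i) (fun _ => (1:ℝ)) x *
        Set.indicator (A j) (fun _ => (1:ℝ)) x) P := by
    intro i j
    have : (fun x => Set.indicator (A i) (fun _ => (1:ℝ)) x *
        Set.indicator (A j) (fun _ => (1:ℝ)) x)
        = Set.indicator (A i ∩ A j) (fun _ => (1:ℝ)) := by
      funext x
      rw [← Set.inter_indicator_mul]
      simp
    rw [this]
    exact (memLp_one_iff_integrable.mp
      (memLp_indicator_const 1 ((hA i).inter (hA j)) (1:ℝ)
        (Or.inr (measure_ne_top P _))))
  have hinti : ∀ i : Fin n, Integrable (fun x => Set.indicator (A i) (fun _ => (1:ℝ)) x) P :=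
    fun i => memLp_one_iff_integrable.mp
      (memLp_indicator_const 1 (hA i) (1:ℝ) (Or.inr (measure_ne_top P _)))
  -- ∫ f = ∑ P (A i)
  have hIf : ∫ x, f x ∂P = ∑ i, (P (A i)).toReal := by
    rw [hf]
    rw [integral_finset_sum _ (fun i _ => hinti i)]
    refine Finset.sum_congr rfl fun i _ => ?_
    rw [integral_indicator_const (1:ℝ) (hA i)]
    simp [measureReal_def]
  -- ∫ f^2 = ∑ i ∑ j P (A i ∩ A j)
  have hIf2 : ∫ x, f x * f x ∂P = ∑ i, ∑ j, (P (A i ∩ A j)).toReal := by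
    have h1 : (fun x => f x * f x)
        = fun x => ∑ i, ∑ j, Set.indicator (A i ∩ A j) (fun _ => (1:ℝ)) x := by
      funext x
      rw [hf]
      rw [Finset.sum_mul_sum]
      refine Finset.sum_congr rfl fun i _ => Finset.sum_congr rfl fun j _ => ?_
      rw [← Set.inter_indicator_mul]
      simp
    rw [h1, integral_finset_sum]
    · refine Finset.sum_congr rfl fun i _ => ?_
      rw [integral_finset_sum]
      · refine Finset.sum_congr rfl fun j _ => ?_
        rw [integral_indicator_const (1:ℝ) ((hA i).inter (hA j))]
        simp [measureReal_def]
      · intro j _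
        exact memLp_one_iff_integrable.mp
          (memLp_indicator_const 1 ((hA i).inter (hA j)) (1:ℝ)
            (Or.inr (measure_ne_top P _)))
    · intro i _
      refine integrable_finset_sum _ fun j _ => ?_
      exact memLp_one_iff_integrable.mp
        (memLp_indicator_const 1 ((hA i).inter (hA j)) (1:ℝ)
          (Or.inr (measure_ne_top P _)))
  -- f * g = f
  have hfg : (fun x => f x * g x) = f := by
    funext x
    by_cases hx : x ∈ ⋃ i, A i
    · rw [hg]
      simp [Set.indicator_of_mem hx]
    · have hfx : f x = 0 := by
        rw [hf]
        refine Finset.sum_eq_zero fun i _ => ?_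
        have : x ∉ A i := fun h => hx (Set.mem_iUnion.mpr ⟨i, h⟩)
        simp [Set.indicator_of_notMem this]
      simp [hfx]
  -- MemLp 2
  have hfL2 : MemLp f 2 P := by
    have hfe : f = ∑ i, (A i).indicator (fun _ => (1:ℝ)) := by
      funext x
      simp [hf, Finset.sum_apply]
    rw [hfe]
    exact memLp_finset_sum' Finset.univ
      (fun i _ => memLp_indicator_const 2 (hA i) (1:ℝ) (Or.inr (measure_ne_top P _)))
  have hgL2 : MemLp g 2 P :=
    memLp_indicator_const 2 hAU (1:ℝ) (Or.inr (measure_ne_top P _))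
  have hconj : Real.HolderConjugate 2 2 := Real.HolderConjugate.two_two
  have hf_nonneg : 0 ≤ᵐ[P] f := by
    refine Filter.Eventually.of_forall fun x => ?_
    exact Finset.sum_nonneg fun i _ => Set.indicator_nonneg (fun _ _ => zero_le_one) x
  have hg_nonneg : 0 ≤ᵐ[P] g := by
    refine Filter.Eventually.of_forall fun x => ?_
    exact Set.indicator_nonneg (fun _ _ => zero_le_one) x
  have h2 : (2:ENNReal) = ENNReal.ofReal (2:ℝ) := by
    rw [ENNReal.ofReal_ofNat]
  have holder := integral_mul_le_Lp_mul_Lq_of_nonneg hconj hf_nonneg hg_nonneg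
    (h2 ▸ hfL2) (h2 ▸ hgL2)
  -- rewrite powers: x ^ (2:ℝ) = x * x for nonneg
  have hfp : ∫ x, f x ^ (2:ℝ) ∂P = ∫ x, f x * f x ∂P := by
    refine integral_congr_ae (Filter.Eventually.of_forall fun x => ?_)
    show f x ^ (2:ℝ) = f x * f x
    rw [show (2:ℝ) = ((2:ℕ):ℝ) by norm_num, Real.rpow_natCast]
    ring
  have hgp : ∫ x, g x ^ (2:ℝ) ∂P = (P (⋃ i, A i)).toReal := by
    have : (fun x => g x ^ (2:ℝ)) = g := by
      funext x
      rw [hg]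
      by_cases hx : x ∈ ⋃ i, A i
      · simp [Set.indicator_of_mem hx]
      · simp [Set.indicator_of_notMem hx]
    rw [this, hg, integral_indicator_const (1:ℝ) hAU]
    simp [measureReal_def]
  rw [hfg, hfp, hgp, hIf, hIf2] at holder
  set a : ℝ := ∑ i, (P (A i)).toReal with ha
  set b : ℝ := ∑ i, ∑ j, (P (A i ∩ A j)).toReal with hb
  set p : ℝ := (P (⋃ i, A i)).toReal with hp
  have hb_nonneg : 0 ≤ b :=
    Finset.sum_nonneg fun i _ => Finset.sum_nonneg fun j _ => ENNReal.toReal_nonneg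
  have hp_nonneg : 0 ≤ p := ENNReal.toReal_nonneg
  -- square Hölder: a^2 ≤ b * p
  have hCS : a ^ 2 ≤ b * p := by
    have hsq : a ^ 2 ≤ (b ^ (1/(2:ℝ)) * p ^ (1/(2:ℝ))) ^ 2 := by
      have h0 : 0 ≤ b ^ (1/(2:ℝ)) * p ^ (1/(2:ℝ)) :=
        mul_nonneg (Real.rpow_nonneg hb_nonneg _) (Real.rpow_nonneg hp_nonneg _)
      exact pow_le_pow_left₀ (le_of_lt hpos) holder 2
    calc a ^ 2 ≤ (b ^ (1/(2:ℝ)) * p ^ (1/(2:ℝ))) ^ 2 := hsq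
      _ = (b ^ (1/(2:ℝ))) ^ 2 * (p ^ (1/(2:ℝ))) ^ 2 := by ring
      _ = b * p := by
          rw [← Real.rpow_natCast (b ^ (1/(2:ℝ))) 2, ← Real.rpow_natCast (p ^ (1/(2:ℝ))) 2,
            ← Real.rpow_mul hb_nonneg, ← Real.rpow_mul hp_nonneg]
          norm_num
  -- b equals the denominator
  have hbeq : b = a + 2 * ∑ i, ∑ j, if i < j then (P (A i ∩ A j)).toReal else 0 := by
    rw [hb, ha]
    have key : ∀ i j : Fin n, (P (A i ∩ A j)).toReal =
        (if i = j then (P (A i)).toReal else 0)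
        + (if i < j then (P (A i ∩ A j)).toReal else 0)
        + (if j < i then (P (A i ∩ A j)).toReal else 0) := by
      intro i j
      rcases lt_trichotomy i j with h | h | h
      · simp [h, ne_of_lt h, not_lt_of_gt h]
      · subst h
        simp [Set.inter_self]
      · simp [h, (ne_of_lt h).symm, not_lt_of_gt h]
    calc ∑ i, ∑ j, (P (A i ∩ A j)).toReal
        = ∑ i, ∑ j, ((if i = j then (P (A i)).toReal else 0)
          + (if i < j then (P (A i ∩ A j)).toReal else 0)
          + (if j < i then (P (A i ∩ A j)).toReal else 0)) := by
          exact Finset.sum_congr rfl fun i _ => Finset.sum_congr rfl fun j _ => key i j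
      _ = (∑ i, ∑ j, if i = j then (P (A i)).toReal else 0)
          + (∑ i, ∑ j, if i < j then (P (A i ∩ A j)).toReal else 0)
          + (∑ i, ∑ j, if j < i then (P (A i ∩ A j)).toReal else 0) := by
          simp [Finset.sum_add_distrib]
      _ = (∑ i, (P (A i)).toReal)
          + 2 * ∑ i, ∑ j, if i < j then (P (A i ∩ A j)).toReal else 0 := by
          have e1 : (∑ i, ∑ j, if i = j then (P (A i)).toReal else 0)
              = ∑ i, (P (A i)).toReal := by
            refine Finset.sum_congr rfl fun i _ => ?_
            simp
          have e2 : (∑ i, ∑ j, if j < i then (P (A i ∩ A j)).toReal else 0)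
              = ∑ i, ∑ j, if i < j then (P (A i ∩ A j)).toReal else 0 := by
            rw [Finset.sum_comm]
            refine Finset.sum_congr rfl fun i _ => Finset.sum_congr rfl fun j _ => ?_
            rw [Set.inter_comm]
          rw [e1, e2]; ring
  have hbpos : 0 < b := by
    rw [hbeq]
    have h2nn : 0 ≤ 2 * ∑ i, ∑ j, if i < j then (P (A i ∩ A j)).toReal else 0 := by
      refine mul_nonneg (by norm_num) ?_
      refine Finset.sum_nonneg fun i _ => Finset.sum_nonneg fun j _ => ?_
      split <;> simp [ENNReal.toReal_nonneg]
    linarith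
  rw [← hbeq, div_le_iff₀ hbpos]
  linarith [hCS]
end

section
/- With F(a) = (2π)^{−1/2} + (1/2) ∫_ℝ ∫_ℝ G_1(a − z) G_1(a − z′) (|z| + |z′| − |z − z′|) dz dz′, one has F(a)/|a| → 1 as |a| → ∞. -/
open MeasureTheory Real Filter

/-- The heat kernel on `ℝ`, the fundamental solution of `∂ₜ u = ∂ₓ² u`. -/
noncomputable def heatKernel (t x : ℝ) : ℝ :=
  (4 * Real.pi * t) ^ (-(1 / 2 : ℝ)) * Real.exp (-x ^ 2 / (4 * t))

/-- The function `F` appearing in the space-time covariance formula of the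
stationary pinned string. -/
noncomputable def stringF (a : ℝ) : ℝ :=
  (2 * Real.pi) ^ (-(1 / 2 : ℝ)) +
    (1 / 2) * ∫ z : ℝ, ∫ z' : ℝ,
      heatKernel 1 (a - z) * heatKernel 1 (a - z') * (|z| + |z'| - |z - z'|)

namespace StringAux

lemma g_eq (x : ℝ) :
    heatKernel 1 x = (4 * π) ^ (-(1 / 2 : ℝ)) * Real.exp (-(4⁻¹ : ℝ) * x ^ 2) := by
  simp only [heatKernel, mul_one]
  ring_nf

lemma g_nonneg (x : ℝ) : 0 ≤ heatKernel 1 x := by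
  rw [g_eq]; positivity

lemma g_cont : Continuous (heatKernel 1) := by
  simp only [funext g_eq]; continuity

lemma g_integrable : Integrable (heatKernel 1) := by
  simp only [funext g_eq]
  exact (integrable_exp_neg_mul_sq (by norm_num)).const_mul _

lemma g_abs_integrable : Integrable (fun x => heatKernel 1 x * |x|) := by
  refine ((integrable_mul_exp_neg_mul_sq (b := (4⁻¹ : ℝ)) (by norm_num)).abs.const_mul
    ((4 * π) ^ (-(1 / 2 : ℝ)))).congr ?_
  filter_upwards with x
  rw [g_eq, abs_mul, abs_of_nonneg (Real.exp_nonneg _)]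
  ring

lemma int_g : ∫ x, heatKernel 1 x = 1 := by
  simp only [funext g_eq]
  rw [integral_const_mul, integral_gaussian]
  have h4 : π / (4⁻¹ : ℝ) = 4 * π := by ring
  rw [h4, Real.sqrt_eq_rpow, Real.rpow_neg (by positivity)]
  exact inv_mul_cancel₀ (by positivity)

end StringAux

namespace Phi

lemma abs_int_le (f : ℝ → ℝ) : |∫ x, f x| ≤ ∫ x, |f x| := by
  simpa [Real.norm_eq_abs] using norm_integral_le_integral_norm (μ := (volume : Measure ℝ)) f

/-- `φ a = ∫ g(u) |a - u| du`. -/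
noncomputable def phi (a : ℝ) : ℝ := ∫ u : ℝ, heatKernel 1 u * |a - u|

noncomputable def K : ℝ := ∫ x : ℝ, heatKernel 1 x * |x|

lemma K_nonneg : 0 ≤ K :=
  integral_nonneg fun x => mul_nonneg (StringAux.g_nonneg x) (abs_nonneg x)

lemma integrable_phi_integrand (a : ℝ) :
    Integrable (fun u => heatKernel 1 u * |a - u|) := by
  refine Integrable.mono' ((StringAux.g_integrable.const_mul |a|).add
    StringAux.g_abs_integrable) ?_ ?_
  · exact (StringAux.g_cont.mul (continuous_const.sub continuous_id).abs).aestronglyMeasurable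
  · filter_upwards with u
    simp only [Pi.add_apply]
    rw [Real.norm_eq_abs, abs_mul, abs_of_nonneg (StringAux.g_nonneg u), abs_abs]
    have h1 : |a - u| ≤ |a| + |u| := abs_sub a u
    nlinarith [StringAux.g_nonneg u]

lemma phi_sub_abs (a : ℝ) : abs (phi a - |a|) ≤ K := by
  have h1 : phi a - |a| = ∫ u : ℝ, (heatKernel 1 u * |a - u| - heatKernel 1 u * |a|) := by
    rw [integral_sub (integrable_phi_integrand a) (StringAux.g_integrable.mul_const |a|),
      integral_mul_const, StringAux.int_g, one_mul, phi]
  rw [h1]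
  refine le_trans (abs_int_le _) ?_
  refine integral_mono_of_nonneg (Filter.Eventually.of_forall fun u => abs_nonneg _)
    StringAux.g_abs_integrable ?_
  filter_upwards with u
  rw [← mul_sub, abs_mul, abs_of_nonneg (StringAux.g_nonneg u)]
  refine mul_le_mul_of_nonneg_left ?_ (StringAux.g_nonneg u)
  refine le_trans (abs_abs_sub_abs_le_abs_sub _ _) ?_
  rw [show a - u - a = -u by ring, abs_neg]

lemma phi_lipschitz (a b : ℝ) : |phi a - phi b| ≤ |a - b| := by
  have h1 : phi a - phi b = ∫ u : ℝ, (heatKernel 1 u * |a - u| - heatKernel 1 u * |b - u|) := by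
    rw [integral_sub (integrable_phi_integrand a) (integrable_phi_integrand b)]; rfl
  rw [h1]
  refine le_trans (abs_int_le _) ?_
  have h2 : (∫ u : ℝ, heatKernel 1 u * |a - b|) = |a - b| := by
    rw [integral_mul_const, StringAux.int_g, one_mul]
  rw [← h2]
  refine integral_mono_of_nonneg (Filter.Eventually.of_forall fun u => abs_nonneg _)
    (StringAux.g_integrable.mul_const _) ?_
  filter_upwards with u
  rw [← mul_sub, abs_mul, abs_of_nonneg (StringAux.g_nonneg u)]
  refine mul_le_mul_of_nonneg_left ?_ (StringAux.g_nonneg u)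
  refine le_trans (abs_abs_sub_abs_le_abs_sub _ _) ?_
  rw [show a - u - (b - u) = a - b by ring]

lemma phi_continuous : Continuous phi := by
  rw [Metric.continuous_iff]
  intro b ε hε
  exact ⟨ε, hε, fun a ha => lt_of_le_of_lt (by simpa [Real.dist_eq] using phi_lipschitz a b) ha⟩

lemma phi_abs_le (a : ℝ) : |phi a| ≤ |a| + K := by
  have h := abs_le.mp (phi_sub_abs a)
  have h2 := abs_nonneg a
  rw [abs_le]
  constructor <;> linarith [h.1, h.2]

end Phi

namespace Main

open Phi

lemma integrable_g_phi : Integrable (fun u => heatKernel 1 u * phi u) := by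
  refine Integrable.mono' (StringAux.g_abs_integrable.add
    (StringAux.g_integrable.mul_const K)) ?_ ?_
  · exact (StringAux.g_cont.mul phi_continuous).aestronglyMeasurable
  · filter_upwards with u
    simp only [Pi.add_apply]
    rw [Real.norm_eq_abs, abs_mul, abs_of_nonneg (StringAux.g_nonneg u)]
    have h1 := phi_abs_le u
    nlinarith [StringAux.g_nonneg u]

lemma int_g_shift (a : ℝ) : ∫ z : ℝ, heatKernel 1 (a - z) = 1 := by
  rw [integral_sub_left_eq_self (heatKernel 1) volume a, StringAux.int_g]

lemma inner_eq (a z : ℝ) :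
    (∫ z' : ℝ, heatKernel 1 (a - z) * heatKernel 1 (a - z') * (|z| + |z'| - |z - z'|))
      = heatKernel 1 (a - z) * (|z| + phi a - phi (a - z)) := by
  have hrw : (fun z' : ℝ => heatKernel 1 (a - z) * heatKernel 1 (a - z') * (|z| + |z'| - |z - z'|))
      = fun z' : ℝ => heatKernel 1 (a - z) * (heatKernel 1 (a - z') * (|z| + |z'| - |z - z'|)) := by
    funext z'; ring
  rw [hrw, integral_const_mul]
  congr 1
  have e1 : Integrable (fun z' : ℝ => heatKernel 1 (a - z') * |z|) :=
    (StringAux.g_integrable.comp_sub_left a).mul_const _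
  have e2 : Integrable (fun z' : ℝ => heatKernel 1 (a - z') * |z'|) := by
    refine ((integrable_phi_integrand a).comp_sub_left a).congr ?_
    filter_upwards with z'
    rw [sub_sub_cancel]
  have e3 : Integrable (fun z' : ℝ => heatKernel 1 (a - z') * |z - z'|) := by
    refine ((integrable_phi_integrand (a - z)).comp_sub_left a).congr ?_
    filter_upwards with z'
    rw [show a - z - (a - z') = z' - z by ring, abs_sub_comm]
  have hsplit : (fun z' : ℝ => heatKernel 1 (a - z') * (|z| + |z'| - |z - z'|))
      = fun z' : ℝ => (heatKernel 1 (a - z') * |z| + heatKernel 1 (a - z') * |z'|)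
        - heatKernel 1 (a - z') * |z - z'| := by
    funext z'; ring
  have e12 : Integrable (fun z' : ℝ => heatKernel 1 (a - z') * |z| + heatKernel 1 (a - z') * |z'|) :=
    e1.add e2
  rw [hsplit, integral_sub e12 e3, integral_add e1 e2]
  have i1 : (∫ z' : ℝ, heatKernel 1 (a - z') * |z|) = |z| := by
    rw [integral_mul_const, int_g_shift, one_mul]
  have i2 : (∫ z' : ℝ, heatKernel 1 (a - z') * |z'|) = phi a := by
    have : (fun z' : ℝ => heatKernel 1 (a - z') * |z'|)
        = fun z' : ℝ => (fun u : ℝ => heatKernel 1 u * |a - u|) (a - z') := by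
      funext z'; simp only []; rw [sub_sub_cancel]
    rw [this, integral_sub_left_eq_self (fun u : ℝ => heatKernel 1 u * |a - u|) volume a, phi]
  have i3 : (∫ z' : ℝ, heatKernel 1 (a - z') * |z - z'|) = phi (a - z) := by
    have : (fun z' : ℝ => heatKernel 1 (a - z') * |z - z'|)
        = fun z' : ℝ => (fun u : ℝ => heatKernel 1 u * |a - z - u|) (a - z') := by
      funext z'; simp only []; rw [show a - z - (a - z') = z' - z by ring, abs_sub_comm]
    rw [this, integral_sub_left_eq_self (fun u : ℝ => heatKernel 1 u * |a - z - u|) volume a, phi]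
  rw [i1, i2, i3]

noncomputable def C : ℝ := ∫ u : ℝ, heatKernel 1 u * phi u

lemma outer_eq (a : ℝ) :
    (∫ z : ℝ, ∫ z' : ℝ,
        heatKernel 1 (a - z) * heatKernel 1 (a - z') * (|z| + |z'| - |z - z'|))
      = 2 * phi a - C := by
  have hrw : (fun z : ℝ => ∫ z' : ℝ,
        heatKernel 1 (a - z) * heatKernel 1 (a - z') * (|z| + |z'| - |z - z'|))
      = fun z : ℝ => (heatKernel 1 (a - z) * |z| + heatKernel 1 (a - z) * phi a)
        - heatKernel 1 (a - z) * phi (a - z) := by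
    funext z; rw [inner_eq]; ring
  rw [hrw]
  have e1 : Integrable (fun z : ℝ => heatKernel 1 (a - z) * |z|) := by
    refine ((integrable_phi_integrand a).comp_sub_left a).congr ?_
    filter_upwards with z
    rw [sub_sub_cancel]
  have e2 : Integrable (fun z : ℝ => heatKernel 1 (a - z) * phi a) :=
    (StringAux.g_integrable.comp_sub_left a).mul_const _
  have e3 : Integrable (fun z : ℝ => heatKernel 1 (a - z) * phi (a - z)) :=
    (integrable_g_phi.comp_sub_left a)
  have e12 : Integrable (fun z : ℝ => heatKernel 1 (a - z) * |z| + heatKernel 1 (a - z) * phi a) :=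
    e1.add e2
  rw [integral_sub e12 e3, integral_add e1 e2]
  have i1 : (∫ z : ℝ, heatKernel 1 (a - z) * |z|) = phi a := by
    have : (fun z : ℝ => heatKernel 1 (a - z) * |z|)
        = fun z : ℝ => (fun u : ℝ => heatKernel 1 u * |a - u|) (a - z) := by
      funext z; simp only []; rw [sub_sub_cancel]
    rw [this, integral_sub_left_eq_self (fun u : ℝ => heatKernel 1 u * |a - u|) volume a, phi]
  have i2 : (∫ z : ℝ, heatKernel 1 (a - z) * phi a) = phi a := by
    rw [integral_mul_const, int_g_shift, one_mul]
  have i3 : (∫ z : ℝ, heatKernel 1 (a - z) * phi (a - z)) = C := by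
    rw [integral_sub_left_eq_self (fun u : ℝ => heatKernel 1 u * phi u) volume a, C]
  rw [i1, i2, i3]
  ring

end Main

namespace Final

open Phi Main

lemma stringF_eq (a : ℝ) :
    stringF a = phi a + ((2 * π) ^ (-(1 / 2 : ℝ)) - C / 2) := by
  rw [stringF, outer_eq]
  ring

noncomputable def B : ℝ := K + |(2 * π) ^ (-(1 / 2 : ℝ)) - C / 2|

lemma stringF_sub (a : ℝ) : abs (stringF a - |a|) ≤ B := by
  rw [stringF_eq, show phi a + ((2 * π) ^ (-(1 / 2 : ℝ)) - C / 2) - |a|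
    = (phi a - |a|) + ((2 * π) ^ (-(1 / 2 : ℝ)) - C / 2) by ring]
  exact le_trans (abs_add_le _ _) (add_le_add_left (phi_sub_abs a) _)

end Final

theorem stringF_div_abs_tendsto_one :
    Tendsto (fun a : ℝ => stringF a / |a|) (Filter.cocompact ℝ) (nhds 1) := by
  have habs : Tendsto (fun a : ℝ => |a|) (Filter.cocompact ℝ) atTop := by
    exact Tendsto.congr (fun a => Real.norm_eq_abs a) (tendsto_norm_cocompact_atTop (E := ℝ))
  have hB : Tendsto (fun a : ℝ => Final.B / |a|) (Filter.cocompact ℝ) (nhds 0) :=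
    Tendsto.div_atTop tendsto_const_nhds habs
  have hev : ∀ᶠ a : ℝ in Filter.cocompact ℝ, (1 : ℝ) ≤ |a| := habs.eventually_ge_atTop 1
  have key : Tendsto (fun a : ℝ => stringF a / |a| - 1) (Filter.cocompact ℝ) (nhds 0) := by
    refine squeeze_zero_norm' ?_ hB
    filter_upwards [hev] with a ha
    have hpos : (0 : ℝ) < |a| := lt_of_lt_of_le one_pos ha
    have h1 : stringF a / |a| - 1 = (stringF a - |a|) / |a| := by
      field_simp
    rw [h1, Real.norm_eq_abs, abs_div, abs_abs]
    exact (div_le_div_iff_of_pos_right hpos).mpr (Final.stringF_sub a)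
  have : (fun a : ℝ => stringF a / |a|) = fun a : ℝ => (stringF a / |a| - 1) + 1 := by
    funext a; ring
  rw [this]
  simpa using key.add (tendsto_const_nhds (x := (1 : ℝ)))
end

section
/- With F(a) = (2π)^{−1/2} + (1/2) ∫_ℝ ∫_ℝ G_1(a − z) G_1(a − z′) (|z| + |z′| − |z − z′|) dz dz′, there exists a constant c_1 > 0 such that for all a ≥ 0, c_1 (1 + a) ≤ F(a) ≤ 2 (1 + a). Moreover one may take c_1 = min((8π)^{−1/2}, inf{F(z)/(2z) : z ≥ 1}), and this infimum is strictly positive. -/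
open MeasureTheory Real

open Set

noncomputable def hc : ℝ := (4 * Real.pi) ^ (-(1 / 2 : ℝ))

lemma hk_eq (x : ℝ) : heatKernel 1 x = hc * Real.exp (-(4⁻¹) * x ^ 2) := by
  unfold heatKernel hc
  rw [mul_one]
  congr 1
  ring

lemma hc_pos : 0 < hc := Real.rpow_pos_of_pos (by positivity) _

lemma hc_eq : hc = (Real.sqrt (4 * Real.pi))⁻¹ := by
  unfold hc
  rw [Real.rpow_neg (by positivity), ← Real.sqrt_eq_rpow]

lemma sqrt4pi_pos : 0 < Real.sqrt (4 * Real.pi) := Real.sqrt_pos.mpr (by positivity)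

lemma hk_pos (x : ℝ) : 0 < heatKernel 1 x := by
  rw [hk_eq]; exact mul_pos hc_pos (Real.exp_pos _)

lemma hk_nonneg (x : ℝ) : 0 ≤ heatKernel 1 x := (hk_pos x).le

lemma hk_even (x : ℝ) : heatKernel 1 (-x) = heatKernel 1 x := by
  rw [hk_eq, hk_eq, neg_sq]

lemma hk_cont : Continuous (heatKernel 1) := by
  have : heatKernel 1 = fun x => hc * Real.exp (-(4⁻¹) * x ^ 2) := funext hk_eq
  rw [this]
  exact continuous_const.mul ((continuous_const.mul (continuous_pow 2)).rexp)

lemma int_hk : Integrable (heatKernel 1) := by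
  have : heatKernel 1 = fun x => hc * Real.exp (-(4⁻¹) * x ^ 2) := funext hk_eq
  rw [this]
  exact (integrable_exp_neg_mul_sq (by norm_num)).const_mul _

lemma integral_hk : ∫ x, heatKernel 1 x = 1 := by
  simp only [hk_eq]
  rw [integral_const_mul, integral_gaussian, hc_eq,
    show Real.pi / 4⁻¹ = 4 * Real.pi by ring]
  rw [inv_mul_cancel₀ sqrt4pi_pos.ne']

lemma integral_hk_Ioi : ∫ x in Ioi (0:ℝ), heatKernel 1 x = 1/2 := by
  simp only [hk_eq]
  rw [integral_const_mul, integral_gaussian_Ioi, hc_eq,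
    show Real.pi / 4⁻¹ = 4 * Real.pi by ring]
  field_simp

lemma integral_xexp : ∫ x in Ioi (0:ℝ), x * Real.exp (-(4⁻¹) * x ^ 2) = 2 := by
  have hderiv : ∀ x ∈ Ici (0:ℝ), HasDerivAt (fun x : ℝ => -2 * Real.exp (-(4⁻¹) * x ^ 2))
      (x * Real.exp (-(4⁻¹) * x ^ 2)) x := by
    intro x _
    have h1 : HasDerivAt (fun x : ℝ => -(4⁻¹) * x ^ 2) (-(4⁻¹) * (2 * x ^ 1)) x :=
      (hasDerivAt_pow 2 x).const_mul _
    have h2 := (h1.exp).const_mul (-2 : ℝ)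
    refine h2.congr_deriv ?_
    ring
  have hint : IntegrableOn (fun x : ℝ => x * Real.exp (-(4⁻¹) * x ^ 2)) (Ioi 0) :=
    (integrable_mul_exp_neg_mul_sq (by norm_num)).integrableOn
  have htend : Filter.Tendsto (fun x : ℝ => -2 * Real.exp (-(4⁻¹) * x ^ 2))
      Filter.atTop (nhds 0) := by
    rw [show (0:ℝ) = -2 * 0 by ring]
    apply Filter.Tendsto.const_mul
    apply Real.tendsto_exp_atBot.comp
    apply Filter.Tendsto.const_mul_atTop_of_neg (by norm_num : (-(4⁻¹):ℝ) < 0)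
    exact Filter.tendsto_pow_atTop two_ne_zero
  have := integral_Ioi_of_hasDerivAt_of_tendsto' hderiv hint htend
  rw [this]
  norm_num

lemma integral_abs_hk : ∫ x, heatKernel 1 x * |x| = 4 * hc := by
  have h1 : ∀ x : ℝ, heatKernel 1 x * |x| = (fun u => heatKernel 1 u * u) |x| := by
    intro x
    rcases abs_choice x with h | h
    · rw [h]
    · rw [h]; simp [hk_even]
  calc ∫ x, heatKernel 1 x * |x| = ∫ x, (fun u => heatKernel 1 u * u) |x| := by
        congr 1; funext x; exact h1 x
    _ = 2 * ∫ x in Ioi (0:ℝ), (fun u => heatKernel 1 u * u) x := integral_comp_abs (f := fun u => heatKernel 1 u * u)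
    _ = 4 * hc := by
        simp only [hk_eq, mul_assoc, mul_comm (Real.exp _)]
        rw [integral_const_mul, integral_xexp]
        ring

lemma hk_even' (a z : ℝ) : heatKernel 1 (a - z) = heatKernel 1 (z - a) := by
  rw [show a - z = -(z - a) by ring, hk_even]

lemma int_hk_shift (a : ℝ) : Integrable (fun z => heatKernel 1 (a - z)) :=
  int_hk.comp_sub_left a

lemma integral_hk_shift (a : ℝ) : ∫ z, heatKernel 1 (a - z) = 1 :=
  (integral_sub_left_eq_self (heatKernel 1) volume a).trans integral_hk

lemma int_hk_shift_abs (a : ℝ) : Integrable (fun z => heatKernel 1 (a - z) * |z|) := by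
  have hg : Integrable (fun u => heatKernel 1 u * |u| + heatKernel 1 u * |a|) := by
    have h0 : Integrable (fun x : ℝ => |x| * Real.exp (-(4⁻¹) * x ^ 2)) := by
      have := (integrable_mul_exp_neg_mul_sq (b := 4⁻¹) (by norm_num)).abs
      have heq : (fun x : ℝ => |x * Real.exp (-(4⁻¹) * x ^ 2)|)
          = fun x : ℝ => |x| * Real.exp (-(4⁻¹) * x ^ 2) := by
        funext x; rw [abs_mul, abs_of_pos (Real.exp_pos _)]
      rwa [heq] at this
    have h1 : Integrable (fun x => heatKernel 1 x * |x|) := by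
      have : (fun x => heatKernel 1 x * |x|)
          = fun x => hc * (|x| * Real.exp (-(4⁻¹) * x ^ 2)) := by
        funext x; rw [hk_eq]; ring
      rw [this]
      exact h0.const_mul _
    exact h1.add (int_hk.mul_const _)
  have hg' := hg.comp_sub_right a
  refine hg'.mono' ?_ ?_
  · exact ((hk_cont.comp (continuous_const.sub continuous_id)).mul continuous_abs).aestronglyMeasurable
  · filter_upwards with z
    rw [Real.norm_eq_abs, abs_of_nonneg (mul_nonneg (hk_nonneg _) (abs_nonneg _))]
    rw [hk_even' a z]
    have : |z| ≤ |z - a| + |a| := by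
      calc |z| = |z - a + a| := by ring_nf
        _ ≤ |z - a| + |a| := abs_add_le _ _
    calc heatKernel 1 (z - a) * |z| ≤ heatKernel 1 (z - a) * (|z - a| + |a|) :=
          mul_le_mul_of_nonneg_left this (hk_nonneg _)
      _ = heatKernel 1 (z - a) * |z - a| + heatKernel 1 (z - a) * |a| := by ring

lemma int_abs_hk : Integrable (fun x => heatKernel 1 x * |x|) := by
  have h0 : Integrable (fun x : ℝ => |x| * Real.exp (-(4⁻¹) * x ^ 2)) := by
    have := (integrable_mul_exp_neg_mul_sq (b := 4⁻¹) (by norm_num)).abs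
    have heq : (fun x : ℝ => |x * Real.exp (-(4⁻¹) * x ^ 2)|)
        = fun x : ℝ => |x| * Real.exp (-(4⁻¹) * x ^ 2) := by
      funext x; rw [abs_mul, abs_of_pos (Real.exp_pos _)]
    rwa [heq] at this
  have : (fun x => heatKernel 1 x * |x|)
      = fun x => hc * (|x| * Real.exp (-(4⁻¹) * x ^ 2)) := by
    funext x; rw [hk_eq]; ring
  rw [this]
  exact h0.const_mul _

lemma integral_hk_shift_abs_le (a : ℝ) :
    ∫ z, heatKernel 1 (a - z) * |z| ≤ |a| + 4 * hc := by
  have hg : Integrable (fun u => heatKernel 1 u * |u| + heatKernel 1 u * |a|) :=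
    int_abs_hk.add (int_hk.mul_const _)
  have step : ∫ z, heatKernel 1 (a - z) * |z|
      ≤ ∫ z, (fun u => heatKernel 1 u * |u| + heatKernel 1 u * |a|) (z - a) := by
    apply integral_mono (int_hk_shift_abs a) (hg.comp_sub_right a)
    intro z
    simp only
    rw [hk_even' a z]
    have : |z| ≤ |z - a| + |a| := by
      calc |z| = |z - a + a| := by ring_nf
        _ ≤ |z - a| + |a| := abs_add_le _ _
    calc heatKernel 1 (z - a) * |z| ≤ heatKernel 1 (z - a) * (|z - a| + |a|) :=
          mul_le_mul_of_nonneg_left this (hk_nonneg _)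
      _ = heatKernel 1 (z - a) * |z - a| + heatKernel 1 (z - a) * |a| := by ring
  have : ∫ z, (fun u => heatKernel 1 u * |u| + heatKernel 1 u * |a|) (z - a)
      = ∫ u, (heatKernel 1 u * |u| + heatKernel 1 u * |a|) :=
    integral_sub_right_eq_self (fun u => heatKernel 1 u * |u| + heatKernel 1 u * |a|) a
  rw [this, integral_add int_abs_hk (int_hk.mul_const _)] at step
  rw [integral_abs_hk] at step
  rw [show ∫ u, heatKernel 1 u * |a| = (∫ u, heatKernel 1 u) * |a| from integral_mul_const _ _,
    integral_hk] at step
  linarith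

lemma setIntegral_hk_shift (a : ℝ) : ∫ z in Ici a, heatKernel 1 (a - z) = 1/2 := by
  rw [← MeasureTheory.integral_indicator measurableSet_Ici]
  have key : ∀ x : ℝ, (Ici a).indicator (fun z => heatKernel 1 (a - z)) (x + a)
      = (Ici (0:ℝ)).indicator (heatKernel 1) x := by
    intro x
    by_cases hx : 0 ≤ x
    · have h1 : x + a ∈ Ici a := by simpa using hx
      have h2 : x ∈ Ici (0:ℝ) := hx
      simp only [Set.indicator_of_mem h1, Set.indicator_of_mem h2]
      rw [show a - (x + a) = -x by ring, hk_even]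
    · have h1 : x + a ∉ Ici a := by simpa using hx
      have h2 : x ∉ Ici (0:ℝ) := hx
      simp only [Set.indicator_of_notMem h1, Set.indicator_of_notMem h2]
  calc ∫ x, (Ici a).indicator (fun z => heatKernel 1 (a - z)) x
      = ∫ x, (Ici a).indicator (fun z => heatKernel 1 (a - z)) (x + a) :=
        (integral_add_right_eq_self _ a).symm
    _ = ∫ x, (Ici (0:ℝ)).indicator (heatKernel 1) x := by simp only [key]
    _ = ∫ x in Ici (0:ℝ), heatKernel 1 x := MeasureTheory.integral_indicator measurableSet_Ici
    _ = ∫ x in Ioi (0:ℝ), heatKernel 1 x := integral_Ici_eq_integral_Ioi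
    _ = 1/2 := integral_hk_Ioi

noncomputable def f2 (a : ℝ) : ℝ × ℝ → ℝ := fun p =>
  heatKernel 1 (a - p.1) * heatKernel 1 (a - p.2) * (|p.1| + |p.2| - |p.1 - p.2|)

lemma tri_nonneg (z z' : ℝ) : 0 ≤ |z| + |z'| - |z - z'| := by
  have : |z - z'| ≤ |z| + |z'| := abs_sub z z'
  linarith

lemma tri_le (z z' : ℝ) : |z| + |z'| - |z - z'| ≤ |z| + |z'| :=
  sub_le_self _ (abs_nonneg _)

lemma f2_nonneg (a : ℝ) (p : ℝ × ℝ) : 0 ≤ f2 a p :=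
  mul_nonneg (mul_nonneg (hk_nonneg _) (hk_nonneg _)) (tri_nonneg _ _)

lemma f2_le_bound (a : ℝ) (p : ℝ × ℝ) : f2 a p ≤
    heatKernel 1 (a - p.1) * |p.1| * heatKernel 1 (a - p.2)
      + heatKernel 1 (a - p.1) * (heatKernel 1 (a - p.2) * |p.2|) := by
  have h := mul_le_mul_of_nonneg_left (tri_le p.1 p.2)
    (mul_nonneg (hk_nonneg (a - p.1)) (hk_nonneg (a - p.2)))
  calc f2 a p ≤ heatKernel 1 (a - p.1) * heatKernel 1 (a - p.2) * (|p.1| + |p.2|) := h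
    _ = heatKernel 1 (a - p.1) * |p.1| * heatKernel 1 (a - p.2)
        + heatKernel 1 (a - p.1) * (heatKernel 1 (a - p.2) * |p.2|) := by ring

lemma int_bound (a : ℝ) : Integrable (fun p : ℝ × ℝ =>
    heatKernel 1 (a - p.1) * |p.1| * heatKernel 1 (a - p.2)
      + heatKernel 1 (a - p.1) * (heatKernel 1 (a - p.2) * |p.2|)) (volume.prod volume) :=
  ((int_hk_shift_abs a).mul_prod (int_hk_shift a)).add
    ((int_hk_shift a).mul_prod (int_hk_shift_abs a))

lemma f2_cont (a : ℝ) : Continuous (f2 a) := by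
  unfold f2
  apply Continuous.mul
  · exact (hk_cont.comp (continuous_const.sub continuous_fst)).mul
      (hk_cont.comp (continuous_const.sub continuous_snd))
  · exact ((continuous_fst.abs.add continuous_snd.abs).sub
      (continuous_fst.sub continuous_snd).abs)

lemma int_f2 (a : ℝ) : Integrable (f2 a) (volume.prod volume) := by
  refine (int_bound a).mono' (f2_cont a).aestronglyMeasurable ?_
  filter_upwards with p
  rw [Real.norm_eq_abs, abs_of_nonneg (f2_nonneg a p)]
  exact f2_le_bound a p

lemma stringF_eq (a : ℝ) : stringF a = (2 * Real.pi) ^ (-(1 / 2 : ℝ))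
    + (1 / 2) * ∫ p, f2 a p ∂(volume.prod volume) := by
  unfold stringF
  congr 1
  congr 1
  exact integral_integral (int_f2 a)

lemma integral_f2_le (a : ℝ) :
    ∫ p, f2 a p ∂(volume.prod volume) ≤ 2 * (|a| + 4 * hc) := by
  have h1 : ∫ p, f2 a p ∂(volume.prod volume) ≤ ∫ p : ℝ × ℝ,
      (heatKernel 1 (a - p.1) * |p.1| * heatKernel 1 (a - p.2)
        + heatKernel 1 (a - p.1) * (heatKernel 1 (a - p.2) * |p.2|)) ∂(volume.prod volume) :=
    integral_mono (int_f2 a) (int_bound a) (f2_le_bound a)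
  rw [integral_add ((int_hk_shift_abs a).mul_prod (int_hk_shift a))
      ((int_hk_shift a).mul_prod (int_hk_shift_abs a))] at h1
  rw [integral_prod_mul (fun z => heatKernel 1 (a - z) * |z|) (fun z => heatKernel 1 (a - z)),
    integral_prod_mul (fun z => heatKernel 1 (a - z)) (fun z => heatKernel 1 (a - z) * |z|)] at h1
  rw [integral_hk_shift a] at h1
  have h2 := integral_hk_shift_abs_le a
  nlinarith [h1, h2]

lemma integral_f2_ge (a : ℝ) (ha : 1 ≤ a) :
    a * (1/4) ≤ ∫ p, f2 a p ∂(volume.prod volume) := by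
  set g : ℝ → ℝ := (Ici a).indicator (fun z => heatKernel 1 (a - z)) with hg
  have hgint : Integrable g := (int_hk_shift a).indicator measurableSet_Ici
  have hlowint : Integrable (fun p : ℝ × ℝ => a * (g p.1 * g p.2)) (volume.prod volume) :=
    (hgint.mul_prod hgint).const_mul a
  have hle : ∀ p : ℝ × ℝ, a * (g p.1 * g p.2) ≤ f2 a p := by
    intro p
    by_cases h1 : p.1 ∈ Ici a
    · by_cases h2 : p.2 ∈ Ici a
      · rw [hg]
        simp only [Set.indicator_of_mem h1, Set.indicator_of_mem h2]
        have hz : a ≤ p.1 := h1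
        have hz' : a ≤ p.2 := h2
        have hp1 : 0 < p.1 := lt_of_lt_of_le (by linarith) hz
        have hp2 : 0 < p.2 := lt_of_lt_of_le (by linarith) hz'
        have htri : a ≤ |p.1| + |p.2| - |p.1 - p.2| := by
          rw [abs_of_pos hp1, abs_of_pos hp2]
          rcases le_total p.1 p.2 with h | h
          · rw [abs_of_nonpos (by linarith)]; linarith
          · rw [abs_of_nonneg (by linarith)]; linarith
        calc a * (heatKernel 1 (a - p.1) * heatKernel 1 (a - p.2))
            = heatKernel 1 (a - p.1) * heatKernel 1 (a - p.2) * a := by ring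
          _ ≤ heatKernel 1 (a - p.1) * heatKernel 1 (a - p.2)
              * (|p.1| + |p.2| - |p.1 - p.2|) :=
            mul_le_mul_of_nonneg_left htri
              (mul_nonneg (hk_nonneg _) (hk_nonneg _))
          _ = f2 a p := rfl
      · rw [hg]
        simp only [Set.indicator_of_notMem h2, mul_zero, mul_zero]
        exact f2_nonneg a p
    · rw [hg]
      simp only [Set.indicator_of_notMem h1, zero_mul, mul_zero]
      exact f2_nonneg a p
  have hmono : ∫ p : ℝ × ℝ, a * (g p.1 * g p.2) ∂(volume.prod volume)
      ≤ ∫ p, f2 a p ∂(volume.prod volume) :=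
    integral_mono hlowint (int_f2 a) hle
  have hval : ∫ p : ℝ × ℝ, a * (g p.1 * g p.2) ∂(volume.prod volume) = a * (1/4) := by
    rw [integral_const_mul, integral_prod_mul g g]
    rw [hg, MeasureTheory.integral_indicator measurableSet_Ici, setIntegral_hk_shift a]
    norm_num
  linarith

lemma num_bound : (2 * Real.pi) ^ (-(1 / 2 : ℝ)) + 4 * hc ≤ 2 := by
  have hpi : (3:ℝ) < Real.pi := Real.pi_gt_three
  have h1 : (2 * Real.pi) ^ (-(1 / 2 : ℝ)) = (Real.sqrt (2 * Real.pi))⁻¹ := by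
    rw [Real.rpow_neg (by positivity), ← Real.sqrt_eq_rpow]
  have h2 : (2:ℝ) ≤ Real.sqrt (2 * Real.pi) := by
    have h := Real.sqrt_le_sqrt (show (4:ℝ) ≤ 2 * Real.pi by linarith)
    rwa [show Real.sqrt 4 = 2 by
      rw [show (4:ℝ) = 2^2 by norm_num, Real.sqrt_sq (by norm_num)]] at h
  have h3 : (3:ℝ) ≤ Real.sqrt (4 * Real.pi) := by
    have h := Real.sqrt_le_sqrt (show (9:ℝ) ≤ 4 * Real.pi by linarith)
    rwa [show Real.sqrt 9 = 3 by
      rw [show (9:ℝ) = 3^2 by norm_num, Real.sqrt_sq (by norm_num)]] at h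
  have h4 : (2 * Real.pi) ^ (-(1 / 2 : ℝ)) ≤ 1/2 := by
    rw [h1]
    rw [show (1:ℝ)/2 = 2⁻¹ by norm_num]
    exact inv_anti₀ (by norm_num) h2
  have h5 : hc ≤ 1/3 := by
    rw [hc_eq, show (1:ℝ)/3 = 3⁻¹ by norm_num]
    exact inv_anti₀ (by norm_num) h3
  linarith

lemma stringF_le (a : ℝ) (ha : 0 ≤ a) : stringF a ≤ 2 * (1 + a) := by
  rw [stringF_eq]
  have h := integral_f2_le a
  rw [abs_of_nonneg ha] at h
  have := num_bound
  nlinarith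

lemma stringF_ge_const (a : ℝ) : (2 * Real.pi) ^ (-(1 / 2 : ℝ)) ≤ stringF a := by
  rw [stringF_eq]
  have h : 0 ≤ ∫ p, f2 a p ∂(volume.prod volume) := integral_nonneg (f2_nonneg a)
  linarith

lemma stringF_ge_lin (a : ℝ) (ha : 1 ≤ a) : a / 8 ≤ stringF a := by
  rw [stringF_eq]
  have h := integral_f2_ge a ha
  have hb : 0 < (2 * Real.pi) ^ (-(1 / 2 : ℝ)) := Real.rpow_pos_of_pos (by positivity) _
  linarith

lemma rpow_8pi : (8 * Real.pi) ^ (-(1 / 2 : ℝ)) * 2 = (2 * Real.pi) ^ (-(1 / 2 : ℝ)) := by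
  have h1 : (8 * Real.pi) ^ (-(1 / 2 : ℝ)) = (Real.sqrt (8 * Real.pi))⁻¹ := by
    rw [Real.rpow_neg (by positivity), ← Real.sqrt_eq_rpow]
  have h2 : (2 * Real.pi) ^ (-(1 / 2 : ℝ)) = (Real.sqrt (2 * Real.pi))⁻¹ := by
    rw [Real.rpow_neg (by positivity), ← Real.sqrt_eq_rpow]
  rw [h1, h2]
  have h3 : Real.sqrt (8 * Real.pi) = 2 * Real.sqrt (2 * Real.pi) := by
    rw [show (8:ℝ) * Real.pi = 4 * (2 * Real.pi) by ring,
      show (4:ℝ) * (2 * Real.pi) = 2^2 * (2 * Real.pi) by norm_num,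
      Real.sqrt_mul (by positivity), Real.sqrt_sq (by norm_num)]
  rw [h3, mul_inv]
  have : (0:ℝ) < Real.sqrt (2 * Real.pi) := Real.sqrt_pos.mpr (by positivity)
  field_simp

theorem stringF_two_sided_bound :
    ∃ c₁ : ℝ, 0 < c₁ ∧
      c₁ = min ((8 * Real.pi) ^ (-(1 / 2 : ℝ)))
        (sInf {r : ℝ | ∃ z : ℝ, 1 ≤ z ∧ r = stringF z / (2 * z)}) ∧
      0 < sInf {r : ℝ | ∃ z : ℝ, 1 ≤ z ∧ r = stringF z / (2 * z)} ∧
      ∀ a : ℝ, 0 ≤ a → c₁ * (1 + a) ≤ stringF a ∧ stringF a ≤ 2 * (1 + a) := by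
  set T : Set ℝ := {r : ℝ | ∃ z : ℝ, 1 ≤ z ∧ r = stringF z / (2 * z)} with hT
  have hTne : T.Nonempty := ⟨stringF 1 / (2 * 1), 1, le_refl 1, rfl⟩
  have hTlb : ∀ r ∈ T, (1:ℝ)/16 ≤ r := by
    rintro r ⟨z, hz, rfl⟩
    have hz0 : (0:ℝ) < z := lt_of_lt_of_le one_pos hz
    have h := stringF_ge_lin z hz
    rw [le_div_iff₀ (by positivity)]
    nlinarith
  have hTbdd : BddBelow T := ⟨1/16, hTlb⟩
  have hInf_pos : 0 < sInf T := lt_of_lt_of_le (by norm_num) (le_csInf hTne hTlb)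
  have h8pi : (0:ℝ) < (8 * Real.pi) ^ (-(1 / 2 : ℝ)) :=
    Real.rpow_pos_of_pos (by positivity) _
  refine ⟨min ((8 * Real.pi) ^ (-(1 / 2 : ℝ))) (sInf T), lt_min h8pi hInf_pos, rfl,
    hInf_pos, ?_⟩
  intro a ha
  constructor
  · rcases le_total a 1 with hle | hge
    · have hc1 : min ((8 * Real.pi) ^ (-(1 / 2 : ℝ))) (sInf T)
          ≤ (8 * Real.pi) ^ (-(1 / 2 : ℝ)) := min_le_left _ _
      have hc0 : 0 ≤ min ((8 * Real.pi) ^ (-(1 / 2 : ℝ))) (sInf T) :=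
        le_min h8pi.le hInf_pos.le
      calc min ((8 * Real.pi) ^ (-(1 / 2 : ℝ))) (sInf T) * (1 + a)
          ≤ (8 * Real.pi) ^ (-(1 / 2 : ℝ)) * 2 := by nlinarith
        _ = (2 * Real.pi) ^ (-(1 / 2 : ℝ)) := rpow_8pi
        _ ≤ stringF a := stringF_ge_const a
    · have hmem : stringF a / (2 * a) ∈ T := ⟨a, hge, rfl⟩
      have hInf_le : sInf T ≤ stringF a / (2 * a) := csInf_le hTbdd hmem
      have hc2 : min ((8 * Real.pi) ^ (-(1 / 2 : ℝ))) (sInf T) ≤ sInf T := min_le_right _ _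
      have hc0 : 0 ≤ min ((8 * Real.pi) ^ (-(1 / 2 : ℝ))) (sInf T) :=
        le_min h8pi.le hInf_pos.le
      have ha0 : (0:ℝ) < a := lt_of_lt_of_le one_pos hge
      have : sInf T * (2 * a) ≤ stringF a := by
        have := mul_le_mul_of_nonneg_right hInf_le (by positivity : (0:ℝ) ≤ 2 * a)
        rwa [div_mul_cancel₀ _ (by positivity : (2:ℝ) * a ≠ 0)] at this
      calc min ((8 * Real.pi) ^ (-(1 / 2 : ℝ))) (sInf T) * (1 + a)
          ≤ sInf T * (2 * a) := by nlinarith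
        _ ≤ stringF a := this
  · exact stringF_le a ha
end
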